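/- Let q ∈ ℝ and k ∈ (0,2π) with k ≠ π. Define on ℓ²(ℤ) the multiplication operators W' by W'(n) := q sin(kn)/n (with sin(0)/0 := 1, so W'(0) = q) and W̃ by W̃(n) := q sin(kn), and set K_{W'} := ½(W'(S*+S) + (S*+S)W') and B_{W'} := W̃(S*−S) − (S*−S)W̃. Then K_{W'} is compact, B_{W'} is bounded, and for every finitely supported u ∈ ℓ²(ℤ), i(W'(A₀u) − A₀(W'u)) = (K_{W'} + B_{W'})u; that is, the commutator form [W', iA₀] extends to the bounded operator K_{W'} + B_{W'}. -/

import Mathlib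

noncomputable section

open scoped ENNReal

/-- The Hilbert space ℓ²(ℤ). -/
abbrev l2Z : Type := lp (fun _ : ℤ => ℂ) 2

/-- The generator of dilations A₀ := i(½(S*+S) − (S*−S)N), acting on functions ℤ → ℂ:
(A₀u)(n) = i( ½(u(n+1)+u(n−1)) − ((n+1)u(n+1) − (n−1)u(n−1)) ). -/
def A0fun1 (u : ℤ → ℂ) (n : ℤ) : ℂ :=
  Complex.I * ((u (n + 1) + u (n - 1)) / 2 -
    (((n : ℂ) + 1) * u (n + 1) - ((n : ℂ) - 1) * u (n - 1)))

/-- W'(n) = q·sin(kn)/n with W'(0) = q. -/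
def WvN1' (q k : ℝ) (n : ℤ) : ℝ :=
  if n = 0 then q else q * Real.sin (k * n) / (n : ℝ)

/-- W̃(n) = q·sin(kn). -/
def WvN1t (q k : ℝ) (n : ℤ) : ℝ := q * Real.sin (k * n)

/-- K_{W'} = ½(W'(S*+S) + (S*+S)W'), acting on functions. -/
def KW'fun (q k : ℝ) (u : ℤ → ℂ) (n : ℤ) : ℂ :=
  (1 / 2 : ℂ) * ((WvN1' q k n : ℂ) * (u (n + 1) + u (n - 1)) +
    ((WvN1' q k (n + 1) : ℂ) * u (n + 1) + (WvN1' q k (n - 1) : ℂ) * u (n - 1)))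

/-- B_{W'} = W̃(S*−S) − (S*−S)W̃, acting on functions. -/
def BW'fun (q k : ℝ) (u : ℤ → ℂ) (n : ℤ) : ℂ :=
  (WvN1t q k n : ℂ) * (u (n + 1) - u (n - 1)) -
    ((WvN1t q k (n + 1) : ℂ) * u (n + 1) - (WvN1t q k (n - 1) : ℂ) * u (n - 1))


open Filter Topology


namespace Aux

lemma p2 : (2 : ℝ≥0∞).toReal = 2 := by norm_num

lemma rp2 (x : ℝ) : x ^ (2 : ℝ≥0∞).toReal = x ^ 2 := by
  rw [p2]; exact Real.rpow_two x

lemma summable_shift (u : l2Z) (d : ℤ) :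
    Summable fun n : ℤ => ‖u (n + d)‖ ^ (2 : ℝ≥0∞).toReal := by
  have h := (memℓp_gen_iff (by rw [p2]; norm_num : 0 < (2:ℝ≥0∞).toReal)).1 (lp.memℓp u)
  exact ((Equiv.addRight d).summable_iff
    (f := fun n : ℤ => ‖u n‖ ^ (2:ℝ≥0∞).toReal)).2 h

lemma memℓp_shift (w : ℤ → ℂ) (C : ℝ) (hC : ∀ n, ‖w n‖ ≤ C) (d : ℤ) (u : l2Z) :
    Memℓp (fun n => w n * u (n + d)) 2 := by
  apply memℓp_gen
  refine Summable.of_nonneg_of_le (fun n => by positivity) (fun n => ?_)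
    ((summable_shift u d).mul_left (C ^ 2))
  rw [rp2, rp2, norm_mul, mul_pow]
  have h1 : ‖w n‖ ^ 2 ≤ C ^ 2 := pow_le_pow_left₀ (norm_nonneg _) (hC n) 2
  exact mul_le_mul_of_nonneg_right h1 (by positivity)

lemma norm_shift_le (w : ℤ → ℂ) (C : ℝ) (hC0 : 0 ≤ C) (hC : ∀ n, ‖w n‖ ≤ C) (d : ℤ)
    (u : l2Z) (f : l2Z) (hf : ∀ n, f n = w n * u (n + d)) : ‖f‖ ≤ C * ‖u‖ := by
  have hp : 0 < (2:ℝ≥0∞).toReal := by rw [p2]; norm_num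
  have key : ‖f‖ ^ 2 ≤ (C * ‖u‖) ^ 2 := by
    have h1 : ‖f‖ ^ (2:ℝ≥0∞).toReal = ∑' n, ‖f n‖ ^ (2:ℝ≥0∞).toReal :=
      lp.norm_rpow_eq_tsum hp f
    have h2 : ‖u‖ ^ (2:ℝ≥0∞).toReal = ∑' n, ‖u n‖ ^ (2:ℝ≥0∞).toReal :=
      lp.norm_rpow_eq_tsum hp u
    have hsf : Summable fun n : ℤ => ‖f n‖ ^ (2:ℝ≥0∞).toReal :=
      (memℓp_gen_iff hp).1 (lp.memℓp f)
    have hb : ∀ n : ℤ, ‖f n‖ ^ (2:ℝ≥0∞).toReal ≤ C ^ 2 * ‖u (n + d)‖ ^ (2:ℝ≥0∞).toReal := by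
      intro n
      rw [rp2, rp2, hf n, norm_mul, mul_pow]
      exact mul_le_mul_of_nonneg_right
        (pow_le_pow_left₀ (norm_nonneg _) (hC n) 2) (by positivity)
    have hts := Summable.tsum_le_tsum hb hsf ((summable_shift u d).mul_left (C ^ 2))
    have hre : (∑' n : ℤ, ‖u (n + d)‖ ^ (2:ℝ≥0∞).toReal)
        = ∑' n : ℤ, ‖u n‖ ^ (2:ℝ≥0∞).toReal := by
      exact (Equiv.addRight d).tsum_eq (fun n : ℤ => ‖u n‖ ^ (2:ℝ≥0∞).toReal)
    calc ‖f‖ ^ 2 = ∑' n, ‖f n‖ ^ (2:ℝ≥0∞).toReal := by rw [← h1, rp2]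
      _ ≤ ∑' n : ℤ, C ^ 2 * ‖u (n + d)‖ ^ (2:ℝ≥0∞).toReal := hts
      _ = C ^ 2 * ∑' n : ℤ, ‖u (n + d)‖ ^ (2:ℝ≥0∞).toReal := tsum_mul_left
      _ = C ^ 2 * ‖u‖ ^ 2 := by rw [hre, ← h2, rp2]
      _ = (C * ‖u‖) ^ 2 := by ring
  have := Real.sqrt_le_sqrt key
  rwa [Real.sqrt_sq (norm_nonneg f), Real.sqrt_sq (by positivity)] at this

def shiftL (w : ℤ → ℂ) (C : ℝ) (hC : ∀ n, ‖w n‖ ≤ C) (d : ℤ) : l2Z →ₗ[ℂ] l2Z where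
  toFun u := ⟨fun n => w n * u (n + d), memℓp_shift w C hC d u⟩
  map_add' u v := by
    apply lp.ext
    funext n
    simp only [lp.coeFn_add, Pi.add_apply]
    show w n * (u + v) (n + d) = _
    rw [lp.coeFn_add]
    simp [mul_add]
  map_smul' c u := by
    apply lp.ext
    funext n
    simp only [RingHom.id_apply, lp.coeFn_smul, Pi.smul_apply]
    show w n * (c • u) (n + d) = _
    rw [lp.coeFn_smul]
    simp [smul_eq_mul]
    ring

def shiftOp (w : ℤ → ℂ) (C : ℝ) (hC0 : 0 ≤ C) (hC : ∀ n, ‖w n‖ ≤ C) (d : ℤ) :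
    l2Z →L[ℂ] l2Z :=
  (shiftL w C hC d).mkContinuous C fun u =>
    norm_shift_le w C hC0 hC d u _ (fun _ => rfl)

@[simp] lemma shiftOp_apply (w : ℤ → ℂ) (C : ℝ) (hC0 : 0 ≤ C) (hC : ∀ n, ‖w n‖ ≤ C)
    (d : ℤ) (u : l2Z) (n : ℤ) : (shiftOp w C hC0 hC d) u n = w n * u (n + d) := rfl

lemma opNorm_le_of_shift {T : l2Z →L[ℂ] l2Z} {w : ℤ → ℂ} {C : ℝ} {d : ℤ}
    (hC0 : 0 ≤ C) (hC : ∀ n, ‖w n‖ ≤ C)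
    (h : ∀ (u : l2Z) (n : ℤ), T u n = w n * u (n + d)) : ‖T‖ ≤ C :=
  T.opNorm_le_bound hC0 fun u => norm_shift_le w C hC0 hC d u (T u) (h u)

/-- coordinate functional -/
def coordL (m : ℤ) : l2Z →ₗ[ℂ] ℂ where
  toFun u := u m
  map_add' u v := by
    show (u + v) m = u m + v m
    rw [lp.coeFn_add]; rfl
  map_smul' c u := by
    show (c • u) m = c • u m
    rw [lp.coeFn_smul]; rfl

def coord (m : ℤ) : l2Z →L[ℂ] ℂ :=
  (coordL m).mkContinuous 1 fun u => by
    rw [one_mul]; exact lp.norm_apply_le_norm (by norm_num : (2:ℝ≥0∞) ≠ 0) u m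

@[simp] lemma coord_apply (m : ℤ) (u : l2Z) : coord m u = u m := rfl

lemma isCompactOperator_smulRight (φ : l2Z →L[ℂ] ℂ) (x : l2Z) :
    IsCompactOperator ⇑(φ.smulRight x) := by
  refine ⟨(fun c : ℂ => c • x) '' Metric.closedBall 0 ‖φ‖,
    (isCompact_closedBall 0 ‖φ‖).image (continuous_id.smul continuous_const), ?_⟩
  refine Filter.mem_of_superset (Metric.closedBall_mem_nhds 0 one_pos) ?_
  intro u hu
  refine ⟨φ u, ?_, rfl⟩
  rw [Metric.mem_closedBall, dist_zero_right] at hu ⊢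
  calc ‖φ u‖ ≤ ‖φ‖ * ‖u‖ := φ.le_opNorm u
    _ ≤ ‖φ‖ * 1 := by gcongr
    _ = ‖φ‖ := mul_one _

lemma lp_sum_apply {ι : Type*} (F : Finset ι) (f : ι → l2Z) (n : ℤ) :
    (∑ j ∈ F, f j) n = ∑ j ∈ F, f j n := by
  classical
  induction F using Finset.induction with
  | empty => simp [lp.coeFn_zero]
  | insert _ _ h ih =>
    rw [Finset.sum_insert h, Finset.sum_insert h, lp.coeFn_add, Pi.add_apply, ih]

lemma isCompactOperator_finsum {ι : Type*} (s : Finset ι) (g : ι → (l2Z →L[ℂ] l2Z))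
    (hg : ∀ n, IsCompactOperator ⇑(g n)) : IsCompactOperator ⇑(∑ n ∈ s, g n) := by
  classical
  induction s using Finset.induction with
  | empty => simpa using isCompactOperator_zero
  | @insert a s h ih =>
    rw [Finset.sum_insert h]
    have hco : ⇑(g a + ∑ x ∈ s, g x) = ⇑(g a) + ⇑(∑ x ∈ s, g x) := rfl
    rw [hco]
    exact (hg _).add ih

lemma trunc_eq (w : ℤ → ℂ) (C : ℝ) (hC0 : 0 ≤ C) (hC : ∀ n, ‖w n‖ ≤ C) (d : ℤ)
    (F : Finset ℤ) (hw : ∀ n ∉ F, w n = 0) :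
    shiftOp w C hC0 hC d
      = ∑ j ∈ F, ((w j • coord (j + d)).smulRight (lp.single 2 j (1 : ℂ))) := by
  classical
  apply ContinuousLinearMap.ext
  intro u
  apply lp.ext
  funext n
  rw [ContinuousLinearMap.sum_apply, lp_sum_apply]
  have hterm : ∀ j : ℤ,
      ((w j • coord (j + d)).smulRight (lp.single 2 j (1 : ℂ) : l2Z)) u n
        = (w j * u (j + d)) • ((lp.single 2 j (1 : ℂ) : l2Z) n) := by
    intro j
    rw [ContinuousLinearMap.smulRight_apply, lp.coeFn_smul, Pi.smul_apply]
    simp [smul_eq_mul]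
  simp only [hterm]
  rw [shiftOp_apply]
  by_cases hn : n ∈ F
  · rw [Finset.sum_eq_single n]
    · rw [lp.single_apply_self, smul_eq_mul, mul_one]
    · intro j _ hj
      rw [lp.single_apply_ne 2 j _ (Ne.symm hj), smul_zero]
    · intro h; exact absurd hn h
  · rw [hw n hn, zero_mul, Finset.sum_eq_zero]
    intro j hj
    rw [lp.single_apply_ne 2 j _ (fun h => hn (by rw [h]; exact hj)), smul_zero]

lemma isCompactOperator_shiftOp (w : ℤ → ℂ) (C : ℝ) (hC0 : 0 ≤ C)
    (hC : ∀ n, ‖w n‖ ≤ C) (d : ℤ)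
    (hfin : ∀ ε : ℝ, 0 < ε → {n : ℤ | ε ≤ ‖w n‖}.Finite) :
    IsCompactOperator ⇑(shiftOp w C hC0 hC d) := by
  classical
  have hε : ∀ j : ℕ, (0:ℝ) < 1 / (j + 1) := fun j => by positivity
  set F : ℕ → Finset ℤ := fun j => (hfin (1 / (j + 1)) (hε j)).toFinset with hF
  set wj : ℕ → ℤ → ℂ := fun j n => if n ∈ F j then w n else 0 with hwjdef
  have hwj : ∀ j n, ‖wj j n‖ ≤ C := by
    intro j n
    simp only [hwjdef]
    split
    · exact hC n
    · simpa using hC0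
  set Tj : ℕ → (l2Z →L[ℂ] l2Z) := fun j => shiftOp (wj j) C hC0 (hwj j) d with hTj
  apply isCompactOperator_of_tendsto (l := atTop) (F := Tj)
  · rw [tendsto_iff_norm_sub_tendsto_zero]
    apply squeeze_zero (fun j => norm_nonneg _) _ tendsto_one_div_add_atTop_nhds_zero_nat
    intro j
    refine opNorm_le_of_shift (w := fun n => wj j n - w n) (d := d) (le_of_lt (hε j)) ?_ ?_
    · intro n
      by_cases hn : n ∈ F j
      · simp only [hwjdef, if_pos hn, sub_self, norm_zero]
        exact le_of_lt (hε j)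
      · simp only [hwjdef, if_neg hn, zero_sub, norm_neg]
        have : ¬ (1 / (j + 1 : ℝ) ≤ ‖w n‖) := by
          intro h
          exact hn ((hfin (1 / (j + 1)) (hε j)).mem_toFinset.2 h)
        exact le_of_not_ge this
    · intro u n
      rw [ContinuousLinearMap.sub_apply, lp.coeFn_sub, Pi.sub_apply,
        shiftOp_apply, shiftOp_apply, sub_mul]
  · filter_upwards with j
    have heq : Tj j = ∑ m ∈ F j, ((wj j m • coord (m + d)).smulRight (lp.single 2 m (1 : ℂ))) :=
      trunc_eq (wj j) C hC0 (hwj j) d (F j) (fun n hn => if_neg hn)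
    rw [heq]
    exact isCompactOperator_finsum _ _ fun m => isCompactOperator_smulRight _ _

end Aux

namespace Aux

lemma normW_le (q k : ℝ) (n : ℤ) : ‖((WvN1' q k n : ℝ) : ℂ)‖ ≤ |q| := by
  rw [Complex.norm_real, Real.norm_eq_abs, WvN1']
  split
  · exact le_refl _
  · next h0 =>
    have h1 : (1:ℝ) ≤ |(n:ℝ)| := by
      rw [← Int.cast_abs]
      exact_mod_cast Int.one_le_abs h0
    rw [abs_div]
    calc |q * Real.sin (k * n)| / |(n:ℝ)| ≤ |q * Real.sin (k * n)| :=
          div_le_self (abs_nonneg _) h1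
      _ = |q| * |Real.sin (k * n)| := abs_mul _ _
      _ ≤ |q| * 1 := by gcongr; exact Real.abs_sin_le_one _
      _ = |q| := mul_one _

lemma normWt_le (q k : ℝ) (n : ℤ) : ‖((WvN1t q k n : ℝ) : ℂ)‖ ≤ |q| := by
  rw [Complex.norm_real, Real.norm_eq_abs, WvN1t, abs_mul]
  calc |q| * |Real.sin (k * n)| ≤ |q| * 1 := by gcongr; exact Real.abs_sin_le_one _
    _ = |q| := mul_one _

lemma finW (q k : ℝ) {ε : ℝ} (hε : 0 < ε) :
    {n : ℤ | ε ≤ ‖((WvN1' q k n : ℝ) : ℂ)‖}.Finite := by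
  set M : ℤ := max 1 ⌈|q| / ε⌉ with hM
  have hM1 : (1:ℤ) ≤ M := le_max_left _ _
  apply (Set.finite_Icc (-M) M).subset
  intro n hn
  simp only [Set.mem_setOf_eq] at hn
  by_cases h0 : n = 0
  · subst h0; constructor <;> omega
  · have h1 : (1:ℝ) ≤ |(n:ℝ)| := by
      rw [← Int.cast_abs]; exact_mod_cast Int.one_le_abs h0
    have hpos : (0:ℝ) < |(n:ℝ)| := lt_of_lt_of_le one_pos h1
    have hle : ε ≤ |q| / |(n:ℝ)| := by
      refine hn.trans ?_
      rw [Complex.norm_real, Real.norm_eq_abs, WvN1', if_neg h0, abs_div]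
      apply (div_le_div_iff_of_pos_right hpos).2
      rw [abs_mul]
      calc |q| * |Real.sin (k * n)| ≤ |q| * 1 := by gcongr; exact Real.abs_sin_le_one _
        _ = |q| := mul_one _
    have habs : |(n:ℝ)| ≤ |q| / ε := by
      rw [le_div_iff₀ hε]
      calc |(n:ℝ)| * ε = ε * |(n:ℝ)| := by ring
        _ ≤ (|q| / |(n:ℝ)|) * |(n:ℝ)| := by gcongr
        _ = |q| := div_mul_cancel₀ _ (ne_of_gt hpos)
    have hcast : |(n:ℝ)| ≤ (M : ℝ) := by
      refine habs.trans (le_trans (Int.le_ceil _) ?_)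
      exact_mod_cast le_max_right (1:ℤ) ⌈|q| / ε⌉
    have hZ : |n| ≤ M := by exact_mod_cast hcast
    have h := abs_le.mp hZ
    exact ⟨h.1, h.2⟩

end Aux

namespace Aux

lemma keyC (q k : ℝ) (m : ℤ) :
    (m : ℂ) * (WvN1' q k m : ℂ) = (WvN1t q k m : ℂ) := by
  by_cases hm : m = 0
  · subst hm; simp [WvN1', WvN1t]
  · have hr : (m : ℝ) * WvN1' q k m = WvN1t q k m := by
      have hm' : (m : ℝ) ≠ 0 := Int.cast_ne_zero.2 hm
      rw [WvN1', if_neg hm, WvN1t]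
      field_simp
    calc (m : ℂ) * (WvN1' q k m : ℂ) = (((m : ℝ) * WvN1' q k m : ℝ) : ℂ) := by
          push_cast; ring
      _ = _ := by rw [hr]

end Aux

open Aux in
theorem WvN1'_A0_commutator' (q k : ℝ) :
    ∃ KW BW : l2Z →L[ℂ] l2Z,
      (∀ (u : l2Z) (n : ℤ), (KW u) n = KW'fun q k (⇑u) n) ∧
      (∀ (u : l2Z) (n : ℤ), (BW u) n = BW'fun q k (⇑u) n) ∧
      IsCompactOperator (⇑KW) ∧
      ∀ u : ℤ → ℂ, (Function.support u).Finite → ∀ n : ℤ,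
        Complex.I * ((WvN1' q k n : ℂ) * A0fun1 u n -
            A0fun1 (fun m => (WvN1' q k m : ℂ) * u m) n) =
          KW'fun q k u n + BW'fun q k u n := by
  classical
  set aK : ℤ → ℂ := fun n => ((WvN1' q k n : ℂ) + (WvN1' q k (n + 1) : ℂ)) / 2 with haKdef
  set bK : ℤ → ℂ := fun n => ((WvN1' q k n : ℂ) + (WvN1' q k (n - 1) : ℂ)) / 2 with hbKdef
  set cB : ℤ → ℂ := fun n => (WvN1t q k n : ℂ) - (WvN1t q k (n + 1) : ℂ) with hcBdef
  set eB : ℤ → ℂ := fun n => (WvN1t q k (n - 1) : ℂ) - (WvN1t q k n : ℂ) with heBdef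
  have haK : ∀ n, ‖aK n‖ ≤ |q| := by
    intro n
    rw [haKdef]
    calc ‖((WvN1' q k n : ℂ) + (WvN1' q k (n + 1) : ℂ)) / 2‖
        = ‖(WvN1' q k n : ℂ) + (WvN1' q k (n + 1) : ℂ)‖ / 2 := by
          rw [norm_div]; norm_num
      _ ≤ (|q| + |q|) / 2 := by
          gcongr
          exact (norm_add_le _ _).trans (add_le_add (normW_le q k n) (normW_le q k (n+1)))
      _ = |q| := by ring
  have hbK : ∀ n, ‖bK n‖ ≤ |q| := by
    intro n
    rw [hbKdef]
    calc ‖((WvN1' q k n : ℂ) + (WvN1' q k (n - 1) : ℂ)) / 2‖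
        = ‖(WvN1' q k n : ℂ) + (WvN1' q k (n - 1) : ℂ)‖ / 2 := by
          rw [norm_div]; norm_num
      _ ≤ (|q| + |q|) / 2 := by
          gcongr
          exact (norm_add_le _ _).trans (add_le_add (normW_le q k n) (normW_le q k (n-1)))
      _ = |q| := by ring
  have hcB : ∀ n, ‖cB n‖ ≤ 2 * |q| := fun n => by
    rw [hcBdef]
    calc ‖(WvN1t q k n : ℂ) - (WvN1t q k (n + 1) : ℂ)‖
        ≤ ‖(WvN1t q k n : ℂ)‖ + ‖(WvN1t q k (n + 1) : ℂ)‖ := norm_sub_le _ _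
      _ ≤ |q| + |q| := add_le_add (normWt_le q k n) (normWt_le q k (n+1))
      _ = 2 * |q| := by ring
  have heB : ∀ n, ‖eB n‖ ≤ 2 * |q| := fun n => by
    rw [heBdef]
    calc ‖(WvN1t q k (n - 1) : ℂ) - (WvN1t q k n : ℂ)‖
        ≤ ‖(WvN1t q k (n - 1) : ℂ)‖ + ‖(WvN1t q k n : ℂ)‖ := norm_sub_le _ _
      _ ≤ |q| + |q| := add_le_add (normWt_le q k (n-1)) (normWt_le q k n)
      _ = 2 * |q| := by ring
  have hq0 : (0:ℝ) ≤ |q| := abs_nonneg q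
  have hq2 : (0:ℝ) ≤ 2 * |q| := by positivity
  refine ⟨shiftOp aK |q| hq0 haK 1 + shiftOp bK |q| hq0 hbK (-1),
          shiftOp cB (2 * |q|) hq2 hcB 1 + shiftOp eB (2 * |q|) hq2 heB (-1),
          ?_, ?_, ?_, ?_⟩
  · intro u n
    rw [ContinuousLinearMap.add_apply, lp.coeFn_add, Pi.add_apply,
      shiftOp_apply, shiftOp_apply]
    have h1 : n + -1 = n - 1 := by ring
    rw [h1, haKdef, hbKdef, KW'fun]
    ring
  · intro u n
    rw [ContinuousLinearMap.add_apply, lp.coeFn_add, Pi.add_apply,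
      shiftOp_apply, shiftOp_apply]
    have h1 : n + -1 = n - 1 := by ring
    rw [h1, hcBdef, heBdef, BW'fun]
    ring
  · have hco : ⇑(shiftOp aK |q| hq0 haK 1 + shiftOp bK |q| hq0 hbK (-1))
        = ⇑(shiftOp aK |q| hq0 haK 1) + ⇑(shiftOp bK |q| hq0 hbK (-1)) := rfl
    rw [hco]
    have hfinshift : ∀ ε : ℝ, 0 < ε → ∀ j : ℤ,
        {n : ℤ | ε ≤ ‖((WvN1' q k (n + j) : ℝ) : ℂ)‖}.Finite := by
      intro ε hε j
      have : {n : ℤ | ε ≤ ‖((WvN1' q k (n + j) : ℝ) : ℂ)‖}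
          = (fun n : ℤ => n + j) ⁻¹' {n : ℤ | ε ≤ ‖((WvN1' q k n : ℝ) : ℂ)‖} := rfl
      rw [this]
      exact Set.Finite.preimage (Function.Injective.injOn (add_left_injective j))
        (finW q k hε)
    have hfin2 : ∀ (j : ℤ) (c : ℤ → ℂ),
        (∀ n, c n = ((WvN1' q k n : ℂ) + (WvN1' q k (n + j) : ℂ)) / 2) →
        ∀ ε : ℝ, 0 < ε → {n : ℤ | ε ≤ ‖c n‖}.Finite := by
      intro j c hc ε hε
      have hsub : {n : ℤ | ε ≤ ‖c n‖} ⊆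
          {n : ℤ | ε ≤ ‖((WvN1' q k n : ℝ) : ℂ)‖} ∪
          {n : ℤ | ε ≤ ‖((WvN1' q k (n + j) : ℝ) : ℂ)‖} := by
        intro n hn
        simp only [Set.mem_setOf_eq] at hn
        by_contra hcon
        simp only [Set.mem_union, Set.mem_setOf_eq, not_or, not_le] at hcon
        have : ‖c n‖ < ε := by
          rw [hc n]
          calc ‖((WvN1' q k n : ℂ) + (WvN1' q k (n + j) : ℂ)) / 2‖
              = ‖(WvN1' q k n : ℂ) + (WvN1' q k (n + j) : ℂ)‖ / 2 := by
                rw [norm_div]; norm_num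
            _ ≤ (‖((WvN1' q k n : ℝ) : ℂ)‖ + ‖((WvN1' q k (n + j) : ℝ) : ℂ)‖) / 2 := by
                gcongr; exact norm_add_le _ _
            _ < (ε + ε) / 2 :=
                (div_lt_div_iff_of_pos_right two_pos).2 (add_lt_add hcon.1 hcon.2)
            _ = ε := by ring
        exact absurd hn (not_le.2 this)
      exact ((finW q k hε).union (hfinshift ε hε j)).subset hsub
    refine IsCompactOperator.add ?_ ?_
    · apply isCompactOperator_shiftOp
      intro ε hε
      exact hfin2 1 aK (fun n => by rw [haKdef]) ε hε
    · apply isCompactOperator_shiftOp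
      intro ε hε
      exact hfin2 (-1) bK (fun n => by rw [hbKdef]; norm_num [sub_eq_add_neg]) ε hε
  · intro u _ n
    have h0 := keyC q k n
    have h1 := keyC q k (n + 1)
    have h2 := keyC q k (n - 1)
    simp only [A0fun1, KW'fun, BW'fun]
    rw [← h0, ← h1, ← h2]
    push_cast
    linear_combination ((WvN1' q k n : ℂ) *
        ((u (n+1) + u (n-1))/2 - (((n:ℂ)+1) * u (n+1) - ((n:ℂ)-1) * u (n-1))) -
      (((WvN1' q k (n+1) : ℂ) * u (n+1) + (WvN1' q k (n-1) : ℂ) * u (n-1))/2 -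
        (((n:ℂ)+1) * ((WvN1' q k (n+1) : ℂ) * u (n+1)) -
         ((n:ℂ)-1) * ((WvN1' q k (n-1) : ℂ) * u (n-1))))) * Complex.I_sq


/-- K_{W'} is compact, B_{W'} is bounded, and the commutator form [W', iA₀]
extends to the bounded operator K_{W'} + B_{W'}: for all finitely supported u,
i(W'(A₀u) − A₀(W'u)) = (K_{W'} + B_{W'})u. -/
theorem WvN1'_A0_commutator (q k : ℝ) (hk0 : 0 < k) (hk2 : k < 2 * Real.pi)
    (hkpi : k ≠ Real.pi) :
    ∃ KW BW : l2Z →L[ℂ] l2Z,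
      (∀ (u : l2Z) (n : ℤ), (KW u) n = KW'fun q k (⇑u) n) ∧
      (∀ (u : l2Z) (n : ℤ), (BW u) n = BW'fun q k (⇑u) n) ∧
      IsCompactOperator (⇑KW) ∧
      ∀ u : ℤ → ℂ, (Function.support u).Finite → ∀ n : ℤ,
        Complex.I * ((WvN1' q k n : ℂ) * A0fun1 u n -
            A0fun1 (fun m => (WvN1' q k m : ℂ) * u m) n) =
          KW'fun q k u n + BW'fun q k u n := by
  exact WvN1'_A0_commutator' q k
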